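/- arXiv:1704.02700 — 5 statements merged into one kernel-verified Lean document; each statement's English description precedes it below -/
import Mathlib

section
/- Let C be a set of 0/1/all constraints (each either a permutation constraint π(φ(u))=φ(v) for a bijection π, or a two-fan constraint (φ(u)=a)∨(φ(v)=b)) with primal graph G, and let φ_A be a partial assignment on A ⊆ V. For a walk W starting in A, define imp(W) by unit propagation along W (imp(W) = all if at some point propagation yields no restriction). Then for any two implicational walks P and Q (walks with imp ≠ all) ending at the same vertex, the concatenated walk P ∘ Q⁻¹ is conflicting (i.e., ends in A with implied value differing from φ_A) if and only if imp(P) ≠ imp(Q). -/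
/-- A 0/1/all constraint between two domains: either a permutation
constraint (given by a bijection) or a two-fan constraint `(φ(u)=a) ∨ (φ(v)=b)`. -/
inductive ZOA (α β : Type) : Type where
  | perm (π : α ≃ β)
  | twofan (a : α) (b : β)

-- Unit propagation: fixing the first variable to `p`, the set of allowed values of the
-- second variable is either everything (`none`, i.e. "all") or a singleton (`some q`).
open Classical in
noncomputable def ZOA.propg {α β : Type} : ZOA α β → α → Option β
  | .perm π, p => some (π p)
  | .twofan a b, p => if p = a then none else some b

/-- The reversed constraint on the opposite directed edge. -/
def ZOA.rev {α β : Type} : ZOA α β → ZOA β α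
  | .perm π => .perm π.symm
  | .twofan a b => .twofan b a

/-- Satisfaction of a 0/1/all constraint by a pair of values. -/
def ZOA.Sat {α β : Type} : ZOA α β → α → β → Prop
  | .perm π, x, y => π x = y
  | .twofan a b, x, y => x = a ∨ y = b

/-- Walks in the primal graph given by an adjacency relation. -/
inductive Wk {V : Type} (adj : V → V → Prop) : V → V → Type where
  | nil (v : V) : Wk adj v v
  | cons {u v w : V} (h : adj u v) (p : Wk adj v w) : Wk adj u w

/-- Concatenation of walks. -/
def Wk.app {V : Type} {adj : V → V → Prop} :
    ∀ {u v w : V}, Wk adj u v → Wk adj v w → Wk adj u w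
  | _, _, _, .nil _, q => q
  | _, _, _, .cons h p, q => .cons h (Wk.app p q)

/-- Reversal of a walk (uses symmetry of the adjacency relation). -/
def Wk.rev {V : Type} {adj : V → V → Prop} (hs : ∀ u v : V, adj u v → adj v u) :
    ∀ {u v : V}, Wk adj u v → Wk adj v u
  | _, _, .nil x => .nil x
  | _, _, .cons h p => Wk.app (Wk.rev hs p) (.cons (hs _ _ h) (.nil _))

/-- The list of vertices of a walk, in order (with multiplicity). -/
def Wk.support {V : Type} {adj : V → V → Prop} : ∀ {u w : V}, Wk adj u w → List V
  | _, _, .nil x => [x]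
  | u, _, .cons _ p => u :: p.support

/-- Appending a single edge at the end of a walk. -/
def Wk.ext {V : Type} {adj : V → V → Prop} {s u t : V}
    (P : Wk adj s u) (h : adj u t) : Wk adj s t :=
  P.app (.cons h (.nil t))

/-- Unit propagation along a walk: `none` means "all" (no restriction), and "all" is
absorbing. -/
noncomputable def runW {V : Type} {adj : V → V → Prop} {D : V → Type}
    (C : ∀ u v : V, adj u v → ZOA (D u) (D v)) :
    ∀ {u w : V}, Wk adj u w → D u → Option (D w)
  | _, _, .nil _, p => some p
  | _, _, .cons h q, p => ((C _ _ h).propg p).bind (runW C q)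

/-- A walk is `φ_A`-implicational if it starts in `A` and unit propagation along it
from the assigned value yields a value (not "all"). -/
def Impl {V : Type} {adj : V → V → Prop} {D : V → Type}
    (C : ∀ u v : V, adj u v → ZOA (D u) (D v)) (A : Set V) (φ : ∀ v ∈ A, D v)
    {s t : V} (W : Wk adj s t) : Prop :=
  ∃ hs : s ∈ A, (runW C W (φ s hs)).isSome

/-- A walk is `φ_A`-conflicting if it is implicational, ends in `A`, and its implied
value differs from the assigned value of its endpoint. -/
def Confl {V : Type} {adj : V → V → Prop} {D : V → Type}
    (C : ∀ u v : V, adj u v → ZOA (D u) (D v)) (A : Set V) (φ : ∀ v ∈ A, D v)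
    {s t : V} (W : Wk adj s t) : Prop :=
  ∃ (hs : s ∈ A) (ht : t ∈ A) (q : D t),
    runW C W (φ s hs) = some q ∧ q ≠ φ t ht

lemma runW_app {V : Type} {adj : V → V → Prop} {D : V → Type}
    (C : ∀ u v : V, adj u v → ZOA (D u) (D v))
    {u v w : V} (P : Wk adj u v) (Q : Wk adj v w) (x : D u) :
    runW C (P.app Q) x = (runW C P x).bind (runW C Q) := by
  induction P with
  | nil => simp [Wk.app, runW]
  | cons h p ih =>
    simp only [Wk.app, runW, Option.bind_assoc]
    cases (C _ _ h).propg x with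
    | none => rfl
    | some m => simp [ih]

lemma ZOA.propg_rev_eq {α β : Type} (e : ZOA α β) {p : α} {q : β}
    (h : e.propg p = some q) :
    e.rev.propg q = none ∨ e.rev.propg q = some p := by
  cases e with
  | perm π =>
    simp only [propg, Option.some.injEq] at h
    right; simp [propg, rev, ← h]
  | twofan a b =>
    classical
    simp only [propg] at h
    by_cases hpa : p = a
    · simp [hpa] at h
    · simp [hpa] at h
      left; simp [propg, rev, h.symm]

lemma ZOA.propg_rev_ne {α β : Type} (e : ZOA α β) {p : α} {q y : β}
    (h : e.propg p = some q) (hy : y ≠ q) :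
    ∃ y', e.rev.propg y = some y' ∧ y' ≠ p := by
  cases e with
  | perm π =>
    simp only [propg, Option.some.injEq] at h
    refine ⟨π.symm y, by simp [propg, rev], ?_⟩
    intro hc
    apply hy
    rw [← h, ← hc]; simp
  | twofan a b =>
    classical
    simp only [propg] at h
    by_cases hpa : p = a
    · simp [hpa] at h
    · simp [hpa] at h
      refine ⟨a, ?_, fun hc => hpa hc.symm⟩
      simp [propg, rev, h ▸ hy]

lemma runW_rev_eq {V : Type} {adj : V → V → Prop} {D : V → Type}
    (hsym : ∀ u v : V, adj u v → adj v u)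
    (C : ∀ u v : V, adj u v → ZOA (D u) (D v))
    (hcompat : ∀ u v (h : adj u v), C v u (hsym u v h) = (C u v h).rev)
    {u w : V} (Q : Wk adj u w) {x : D u} {z : D w}
    (h : runW C Q x = some z) :
    runW C (Q.rev hsym) z = none ∨ runW C (Q.rev hsym) z = some x := by
  induction Q with
  | nil => simp only [runW, Option.some.injEq] at h; right; simp [Wk.rev, runW, h]
  | cons he p ih =>
    simp only [runW] at h
    cases hm : (C _ _ he).propg x with
    | none => rw [hm] at h; simp at h
    | some m =>
      rw [hm] at h; simp only [Option.bind_some] at h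
      rcases ih h with h1 | h1
      · simp [Wk.rev, runW_app, h1]
      · simp only [Wk.rev, runW_app, h1, Option.bind_some, runW]
        rw [hcompat _ _ he]
        rcases (C _ _ he).propg_rev_eq hm with h2 | h2 <;> simp [h2]

lemma runW_rev_ne {V : Type} {adj : V → V → Prop} {D : V → Type}
    (hsym : ∀ u v : V, adj u v → adj v u)
    (C : ∀ u v : V, adj u v → ZOA (D u) (D v))
    (hcompat : ∀ u v (h : adj u v), C v u (hsym u v h) = (C u v h).rev)
    {u w : V} (Q : Wk adj u w) {x : D u} {z y : D w}
    (h : runW C Q x = some z) (hy : y ≠ z) :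
    ∃ y', runW C (Q.rev hsym) y = some y' ∧ y' ≠ x := by
  induction Q with
  | nil =>
    simp only [runW, Option.some.injEq] at h
    exact ⟨y, by simp [Wk.rev, runW], h ▸ hy⟩
  | cons he p ih =>
    simp only [runW] at h
    cases hm : (C _ _ he).propg x with
    | none => rw [hm] at h; simp at h
    | some m =>
      rw [hm] at h; simp only [Option.bind_some] at h
      obtain ⟨y', hy', hy'm⟩ := ih h hy
      obtain ⟨y'', hy'', hy''x⟩ := (C _ _ he).propg_rev_ne hm hy'm
      refine ⟨y'', ?_, hy''x⟩
      simp only [Wk.rev, runW_app, hy', runW, Option.bind_some]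
      rw [hcompat _ _ he, hy'']
      rfl

/-- Lemma 1 of the paper: for any two implicational walks `P` and `Q`
ending at the same vertex, the concatenation `P ∘ Q⁻¹` is conflicting iff
`imp(P) ≠ imp(Q)`. -/
theorem confl_append_rev_iff_imp_ne
    {V : Type} {adj : V → V → Prop} {D : V → Type}
    (hsym : ∀ u v : V, adj u v → adj v u)
    (C : ∀ u v : V, adj u v → ZOA (D u) (D v))
    (hcompat : ∀ u v (h : adj u v), C v u (hsym u v h) = (C u v h).rev)
    (A : Set V) (φ : ∀ v ∈ A, D v)
    {p q t : V} (P : Wk adj p t) (Q : Wk adj q t)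
    (hp : p ∈ A) (hq : q ∈ A)
    (hP : (runW C P (φ p hp)).isSome) (hQ : (runW C Q (φ q hq)).isSome) :
    Confl C A φ (P.app (Q.rev hsym)) ↔ runW C P (φ p hp) ≠ runW C Q (φ q hq) := by
  obtain ⟨yP, hyP⟩ := Option.isSome_iff_exists.mp hP
  obtain ⟨yQ, hyQ⟩ := Option.isSome_iff_exists.mp hQ
  rw [hyP, hyQ]
  constructor
  · rintro ⟨hs, ht, r, hr, hrne⟩ hEq
    rw [runW_app, show φ p hs = φ p hp from rfl, hyP, Option.bind_some] at hr
    injection hEq with hEq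
    subst hEq
    rcases runW_rev_eq hsym C hcompat Q hyQ with h1 | h1 <;> rw [h1] at hr
    · exact (Option.some_ne_none r hr.symm).elim
    · exact hrne (Option.some.inj hr).symm
  · intro hne
    have hyne : yP ≠ yQ := fun h => hne (h ▸ rfl)
    obtain ⟨y', hy', hy'x⟩ := runW_rev_ne hsym C hcompat Q hyQ hyne
    exact ⟨hp, hq, y', by rw [runW_app, hyP, Option.bind_some]; exact hy', hy'x⟩
end

section
/- Let y be a maximum basic F-packing (a sum of vertex-disjoint integral paths of weight 1 and wheels) and x a minimum half-integral F-cover, with |x| = |y|. Then for every wheel W in y of degree d(W), x assigns total weight at least d(W)/2 to the set of vertices of W; moreover if equality holds, then every spoke S of W satisfies x(V(S)) = 1/2. -/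
open scoped BigOperators

/-- A *wheel* for the family `F` of conflicting `A`-walks: a simple cycle
`H_1 ∘ … ∘ H_d` (`d` odd) together with pairwise vertex-disjoint spokes
`S_1, …, S_d` from `A` to the cycle, each internally disjoint from the cycle, such
that `S_i ∘ H_i ∘ S_{i+1}⁻¹ ∈ F` for all `i` (indices cyclic). -/
structure Wheel {V : Type} [DecidableEq V] {adj : V → V → Prop}
    (hs : ∀ u v : V, adj u v → adj v u)
    (A : Set V) (F : ∀ u v : V, Wk adj u v → Prop) : Type where
  d : ℕ
  hodd : Odd d
  hpos : 0 < d
  hub : Fin d → V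
  H : ∀ i : Fin d, Wk adj (hub i) (hub (finRotate d i))
  src : Fin d → V
  hsrc : ∀ i, src i ∈ A
  S : ∀ i : Fin d, Wk adj (src i) (hub i)
  spoke_path : ∀ i, (S i).support.Nodup
  spokes_disjoint : ∀ i j, i ≠ j → ∀ x, x ∈ (S i).support → x ∉ (S j).support
  spoke_meets_cycle : ∀ i j, ∀ x, x ∈ (S i).support → x ∈ (H j).support → x = hub i
  cycle_simple : ∀ x : V, (∑ i : Fin d, (H i).support.dropLast.count x) ≤ 1
  cycle_len : 3 ≤ ∑ i : Fin d, (H i).support.dropLast.length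
  mem : ∀ i : Fin d, F (src i) (src (finRotate d i))
    (((S i).app (H i)).app ((S (finRotate d i)).rev hs))

/-- The set of vertices of a wheel. -/
def Wheel.verts {V : Type} [DecidableEq V] {adj : V → V → Prop}
    {hs : ∀ u v : V, adj u v → adj v u}
    {A : Set V} {F : ∀ u v : V, Wk adj u v → Prop}
    (w : Wheel hs A F) : Finset V :=
  Finset.univ.biUnion
    (fun i : Fin w.d => (w.H i).support.toFinset ∪ (w.S i).support.toFinset)

/-- The set of vertices of an integral path (given with its endpoints). -/
def pVerts {V : Type} [DecidableEq V] {adj : V → V → Prop}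
    (p : Σ s t : V, Wk adj s t) : Finset V :=
  p.2.2.support.toFinset

namespace Wk
variable {V : Type} {adj : V → V → Prop}

theorem support_ne_nil : ∀ {u w : V} (p : Wk adj u w), p.support ≠ []
  | _, _, .nil _ => by simp [Wk.support]
  | _, _, .cons h p => by simp [Wk.support]

theorem support_eq_cons : ∀ {u w : V} (p : Wk adj u w), ∃ t, p.support = u :: t
  | _, _, .nil v => ⟨[], rfl⟩
  | _, _, .cons h p => ⟨p.support, rfl⟩

theorem getLast?_support : ∀ {u w : V} (p : Wk adj u w), p.support.getLast? = some w
  | _, _, .nil v => rfl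
  | _, _, .cons h p => by
    rw [show (Wk.cons h p).support = _ :: p.support from rfl, List.getLast?_cons,
      getLast?_support p]
    rfl

theorem getLast_support {u w : V} (p : Wk adj u w) (h : p.support ≠ []) :
    p.support.getLast h = w := by
  have := getLast?_support p
  rwa [List.getLast?_eq_getLast h, Option.some_inj] at this

theorem support_app : ∀ {u v w : V} (p : Wk adj u v) (q : Wk adj v w),
    (p.app q).support = p.support.dropLast ++ q.support
  | _, _, _, .nil _, q => by simp [Wk.app, Wk.support]
  | u, _, _, .cons h p, q => by
    show u :: (p.app q).support = (u :: p.support).dropLast ++ q.support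
    rw [List.dropLast_cons_of_ne_nil (support_ne_nil p), support_app p q, List.cons_append]

theorem support_rev (hs : ∀ u v : V, adj u v → adj v u) :
    ∀ {u w : V} (p : Wk adj u w), (p.rev hs).support = p.support.reverse
  | _, _, .nil v => rfl
  | u, _, @Wk.cons _ _ _ v _ h p => by
    show ((p.rev hs).app (.cons (hs _ _ h) (.nil _))).support = (u :: p.support).reverse
    rw [support_app, support_rev hs p]
    obtain ⟨t, ht⟩ := support_eq_cons p
    rw [ht]
    simp [Wk.support]

theorem mem_of_mem_dropLast {l : List V} {v : V} (h : v ∈ l.dropLast) : v ∈ l :=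
  List.mem_of_mem_dropLast h

end Wk
open Fin.NatCast in
theorem finRotate_iterate_self (d : ℕ) (i : Fin d) : (⇑(finRotate d))^[d] i = i := by
  cases d with
  | zero => exact i.elim0
  | succ n =>
    suffices h : ∀ k, (⇑(finRotate (n + 1)))^[k] i = i + (k : Fin (n + 1)) by
      rw [h (n + 1), Fin.natCast_self, add_zero]
    intro k
    induction k with
    | zero => simp
    | succ m ih =>
      rw [Function.iterate_succ_apply', ih, finRotate_succ_apply, Nat.cast_add, Nat.cast_one,
        add_assoc]

theorem finRotate_ne_self {d : ℕ} (hd : 1 < d) (i : Fin d) : finRotate d i ≠ i := by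
  intro h
  cases d with
  | zero => exact i.elim0
  | succ n =>
    have hv := coe_finRotate i
    rw [h] at hv
    have := i.isLt
    have hlast : (Fin.last n : Fin (n + 1)).val = n := rfl
    by_cases hl : i = Fin.last n
    · rw [if_pos hl] at hv
      rw [hl] at hv
      omega
    · rw [if_neg hl] at hv
      omega

section WheelLemmas

variable {V : Type} [DecidableEq V] {adj : V → V → Prop}
    {hs : ∀ u v : V, adj u v → adj v u}
    {A : Set V} {F : ∀ u v : V, Wk adj u v → Prop}
    (Wl : Wheel hs A F)

theorem Wheel.spoke_last (i : Fin Wl.d) :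
    (Wl.S i).support = (Wl.S i).support.dropLast ++ [Wl.hub i] := by
  conv_lhs => rw [← List.dropLast_append_getLast (Wk.support_ne_nil (Wl.S i))]
  rw [Wk.getLast_support]

theorem Wheel.hub_mem_spoke (i : Fin Wl.d) : Wl.hub i ∈ (Wl.S i).support := by
  rw [Wl.spoke_last i]; simp

theorem Wheel.hub_injective : Function.Injective Wl.hub := by
  intro i j hij
  by_contra hne
  have hi : Wl.hub j ∈ (Wl.S i).support := by
    rw [← hij]; exact Wl.hub_mem_spoke i
  exact Wl.spokes_disjoint i j hne _ hi (Wl.hub_mem_spoke j)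

theorem Wheel.cycle_nonnil (i : Fin Wl.d) :
    ∃ t, (Wl.H i).support = Wl.hub i :: t ∧ t ≠ [] := by
  obtain ⟨t, ht⟩ := Wk.support_eq_cons (Wl.H i)
  refine ⟨t, ht, ?_⟩
  intro h0
  subst h0
  -- then the segment is trivial: hub (rot i) = hub i
  have hlast : Wl.hub (finRotate Wl.d i) = Wl.hub i := by
    have h2 := Wk.getLast?_support (Wl.H i)
    rw [ht] at h2
    simpa using h2.symm
  rcases eq_or_lt_of_le (Nat.one_le_iff_ne_zero.mpr Wl.hpos.ne') with h1 | h1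
  · -- d = 1 : contradiction with cycle length
    have hall : ∀ j : Fin Wl.d, j = i := by
      intro j
      apply Fin.ext
      have := j.isLt
      have := i.isLt
      omega
    have hlen := Wl.cycle_len
    rw [Fintype.sum_eq_single i (fun j hj => absurd (hall j) hj)] at hlen
    rw [ht] at hlen
    simp at hlen
  · exact finRotate_ne_self h1 i (Wl.hub_injective hlast)

theorem Wheel.cov_decomp (x : V → ℚ) (i : Fin Wl.d) :
    (((((Wl.S i).app (Wl.H i)).app ((Wl.S (finRotate Wl.d i)).rev hs))).support.map x).sum
      = (((Wl.S i).support.dropLast).map x).sum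
        + (((Wl.H i).support.dropLast).map x).sum
        + (((Wl.S (finRotate Wl.d i)).support).map x).sum := by
  rw [Wk.support_app, Wk.support_app, Wk.support_rev,
    List.dropLast_append_of_ne_nil (Wk.support_ne_nil (Wl.H i))]
  simp [List.map_append, List.sum_append, List.map_reverse, List.sum_reverse]
  ring

theorem Wheel.spoke_sum (x : V → ℚ) (i : Fin Wl.d) :
    ((Wl.S i).support.map x).sum
      = (((Wl.S i).support.dropLast).map x).sum + x (Wl.hub i) := by
  conv_lhs => rw [Wl.spoke_last i]
  simp

end WheelLemmas
/-- let `y` be a maximum basic `F`-packing, given by vertex-disjoint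
integral paths (indexed by `ιP`) and wheels (indexed by `ιW`), and let `x` be a
minimum half-integral `F`-cover with `|x| = |y|`. Then every wheel `w` of `y`
satisfies `x(V(w)) ≥ d(w)/2`, and if equality holds then every spoke `S` of `w`
satisfies `x(V(S)) = 1/2`. -/
theorem wheel_cover_bound
    {V : Type} [Fintype V] [DecidableEq V] {adj : V → V → Prop}
    (hs : ∀ u v : V, adj u v → adj v u)
    (A : Set V) (F : ∀ u v : V, Wk adj u v → Prop)
    {ιP ιW : Type} [Fintype ιP] [Fintype ιW]
    (pth : ιP → Σ s t : V, Wk adj s t)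
    (hpthF : ∀ p, F (pth p).1 (pth p).2.1 (pth p).2.2)
    (hpthSimple : ∀ p, (pth p).2.2.support.Nodup)
    (whl : ιW → Wheel hs A F)
    (hPP : ∀ p p', p ≠ p' → Disjoint (pVerts (pth p)) (pVerts (pth p')))
    (hWW : ∀ w w', w ≠ w' → Disjoint (whl w).verts (whl w').verts)
    (hPW : ∀ p w, Disjoint (pVerts (pth p)) (whl w).verts)
    (x : V → ℚ)
    (hxval : ∀ v, x v = 0 ∨ x v = 1/2 ∨ x v = 1)
    (hcover : ∀ (s t : V) (W : Wk adj s t), F s t W → 1 ≤ (W.support.map x).sum)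
    (hsize : ∑ v : V, x v = (Fintype.card ιP : ℚ) + ∑ w : ιW, ((whl w).d : ℚ) / 2)
    (w : ιW) :
    ((((whl w).d : ℚ) / 2) ≤ ∑ v ∈ (whl w).verts, x v) ∧
    ((∑ v ∈ (whl w).verts, x v) = ((whl w).d : ℚ) / 2 →
      ∀ i : Fin (whl w).d, (∑ v ∈ ((whl w).S i).support.toFinset, x v) = 1/2) := by
  classical
  set Wl := whl w with hWl
  have hx0 : ∀ v, 0 ≤ x v := by
    intro v; rcases hxval v with h | h | h <;> rw [h] <;> norm_num
  -- abbreviations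
  set u : Fin Wl.d → ℚ := fun i => ((Wl.S i).support.map x).sum with hu_def
  set cov : Fin Wl.d → ℚ :=
    fun i =>
      (((((Wl.S i).app (Wl.H i)).app ((Wl.S (finRotate Wl.d i)).rev hs))).support.map x).sum
    with hcov_def
  have hcov1 : ∀ i, 1 ≤ cov i := fun i => hcover _ _ _ (Wl.mem i)
  have hcsum : ∀ i, cov i = (((Wl.S i).support.dropLast).map x).sum
      + (((Wl.H i).support.dropLast).map x).sum + u (finRotate Wl.d i) := by
    intro i
    simp only [hcov_def, hu_def]
    exact Wl.cov_decomp x i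
  have hu_last : ∀ i, u i = (((Wl.S i).support.dropLast).map x).sum + x (Wl.hub i) := by
    intro i
    simp only [hu_def]
    exact Wl.spoke_sum x i
  -- the finsets of spoke and (truncated) cycle vertices
  set Sfin : Finset V := Finset.univ.biUnion (fun i => (Wl.S i).support.toFinset) with hSfin
  set Cfin : Finset V :=
    Finset.univ.biUnion (fun i => ((Wl.H i).support.dropLast).toFinset) with hCfin
  have hsumu : ∑ i, u i = ∑ v ∈ Sfin, x v := by
    rw [hSfin, Finset.sum_biUnion]
    · exact Finset.sum_congr rfl fun i _ => (List.sum_toFinset x (Wl.spoke_path i)).symm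
    · intro i _ j hj hij
      simp only [Finset.disjoint_left, List.mem_toFinset]
      exact fun a ha => Wl.spokes_disjoint i j hij a ha
  -- the cycle bound
  have hB : ∑ i, (((Wl.H i).support.dropLast).map x).sum ≤ ∑ v ∈ Cfin, x v := by
    have e1 : ∀ i : Fin Wl.d, (((Wl.H i).support.dropLast).map x).sum
        = ∑ v ∈ Cfin, (((Wl.H i).support.dropLast).count v : ℚ) * x v := by
      intro i
      rw [Finset.sum_list_map_count]
      rw [← Finset.sum_subset (s₁ := ((Wl.H i).support.dropLast).toFinset) (s₂ := Cfin)]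
      · exact Finset.sum_congr rfl fun v _ => by rw [nsmul_eq_mul]
      · intro v hv
        rw [hCfin]
        exact Finset.mem_biUnion.mpr ⟨i, Finset.mem_univ i, hv⟩
      · intro v _ hv
        rw [List.count_eq_zero_of_not_mem (fun hm => hv (List.mem_toFinset.mpr hm))]
        simp
    calc ∑ i, (((Wl.H i).support.dropLast).map x).sum
        = ∑ v ∈ Cfin, ∑ i, (((Wl.H i).support.dropLast).count v : ℚ) * x v := by
          rw [Finset.sum_comm]
          exact Finset.sum_congr rfl fun i _ => e1 i
      _ ≤ ∑ v ∈ Cfin, x v := by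
          refine Finset.sum_le_sum fun v _ => ?_
          have h1 : ∑ i, (((Wl.H i).support.dropLast).count v : ℚ) * x v
              = ((∑ i, ((Wl.H i).support.dropLast).count v : ℕ) : ℚ) * x v := by
            rw [← Finset.sum_mul]
            push_cast
            ring
          rw [h1]
          have h2 : ((∑ i, ((Wl.H i).support.dropLast).count v : ℕ) : ℚ) ≤ 1 := by
            have := Wl.cycle_simple v
            exact_mod_cast this
          nlinarith [hx0 v]
  have hhubsum : ∑ v ∈ Finset.image Wl.hub Finset.univ, x v = ∑ i, x (Wl.hub i) :=
    Finset.sum_image fun i _ j _ h => Wl.hub_injective h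
  have hsplit : ∑ v ∈ Cfin, x v ≤ ∑ i, x (Wl.hub i) + ∑ v ∈ Cfin \ Sfin, x v := by
    have hCS : Cfin ∩ Sfin ⊆ Finset.image Wl.hub Finset.univ := by
      intro v hv
      rw [Finset.mem_inter, hCfin, hSfin] at hv
      obtain ⟨hvC, hvS⟩ := hv
      obtain ⟨i, _, hvi⟩ := Finset.mem_biUnion.mp hvC
      obtain ⟨k, _, hvk⟩ := Finset.mem_biUnion.mp hvS
      have : v = Wl.hub k :=
        Wl.spoke_meets_cycle k i v (List.mem_toFinset.mp hvk)
          (List.mem_of_mem_dropLast (List.mem_toFinset.mp hvi))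
      rw [this]
      exact Finset.mem_image_of_mem _ (Finset.mem_univ k)
    have h1 : ∑ v ∈ Cfin ∩ Sfin, x v + ∑ v ∈ Cfin \ Sfin, x v = ∑ v ∈ Cfin, x v :=
      Finset.sum_inter_add_sum_sdiff Cfin Sfin x
    have h2 : ∑ v ∈ Cfin ∩ Sfin, x v ≤ ∑ v ∈ Finset.image Wl.hub Finset.univ, x v :=
      Finset.sum_le_sum_of_subset_of_nonneg hCS fun v _ _ => hx0 v
    linarith [hhubsum]
  have hveq : ∑ i, u (finRotate Wl.d i) = ∑ i, u i := Equiv.sum_comp (finRotate Wl.d) u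
  have hcovsum : ∑ i, cov i = 2 * (∑ i, u i) - (∑ i, x (Wl.hub i))
      + ∑ i, (((Wl.H i).support.dropLast).map x).sum := by
    calc ∑ i, cov i
        = ∑ i, ((((Wl.S i).support.dropLast).map x).sum
            + (((Wl.H i).support.dropLast).map x).sum + u (finRotate Wl.d i)) :=
          Finset.sum_congr rfl fun i _ => hcsum i
      _ = ∑ i, (((Wl.S i).support.dropLast).map x).sum
            + ∑ i, (((Wl.H i).support.dropLast).map x).sum + ∑ i, u (finRotate Wl.d i) := by
          rw [Finset.sum_add_distrib, Finset.sum_add_distrib]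
      _ = ∑ i, (u i - x (Wl.hub i))
            + ∑ i, (((Wl.H i).support.dropLast).map x).sum + ∑ i, u i := by
          rw [hveq]
          congr 2
          exact Finset.sum_congr rfl fun i _ => by rw [hu_last i]; ring
      _ = _ := by rw [Finset.sum_sub_distrib]; ring
  have hCmS_sub : Sfin ∪ (Cfin \ Sfin) ⊆ Wl.verts := by
    intro v hv
    rw [Finset.mem_union] at hv
    have hv' : v ∈ Sfin ∨ v ∈ Cfin := by
      rcases hv with h | h
      · exact Or.inl h
      · exact Or.inr (Finset.mem_sdiff.mp h).1
    rw [Wheel.verts]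
    rcases hv' with h | h
    · rw [hSfin] at h
      obtain ⟨i, _, hvi⟩ := Finset.mem_biUnion.mp h
      exact Finset.mem_biUnion.mpr ⟨i, Finset.mem_univ i,
        Finset.mem_union_right _ hvi⟩
    · rw [hCfin] at h
      obtain ⟨i, _, hvi⟩ := Finset.mem_biUnion.mp h
      refine Finset.mem_biUnion.mpr ⟨i, Finset.mem_univ i, Finset.mem_union_left _ ?_⟩
      exact List.mem_toFinset.mpr
        (List.mem_of_mem_dropLast (List.mem_toFinset.mp hvi))
  have hfinal : ∑ v ∈ Sfin, x v + ∑ v ∈ Cfin \ Sfin, x v ≤ ∑ v ∈ Wl.verts, x v := by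
    rw [← Finset.sum_union Finset.disjoint_sdiff]
    exact Finset.sum_le_sum_of_subset_of_nonneg hCmS_sub fun v _ _ => hx0 v
  have hd_le : (Wl.d : ℚ) ≤ ∑ i, cov i := by
    calc (Wl.d : ℚ) = ∑ _i : Fin Wl.d, (1 : ℚ) := by simp
      _ ≤ ∑ i, cov i := Finset.sum_le_sum fun i _ => hcov1 i
  have hCmS0 : (0 : ℚ) ≤ ∑ v ∈ Cfin \ Sfin, x v := Finset.sum_nonneg fun v _ => hx0 v
  have part1 : ((Wl.d : ℚ) / 2) ≤ ∑ v ∈ Wl.verts, x v := by linarith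
  refine ⟨part1, ?_⟩
  intro heq i
  -- equality case: everything is tight
  have hcovd : ∑ i, cov i = (Wl.d : ℚ) := by linarith
  have hcovi : ∀ j, cov j = 1 := by
    have h0 : ∑ j, (cov j - 1) = 0 := by
      rw [Finset.sum_sub_distrib, hcovd]
      simp
    have := (Finset.sum_eq_zero_iff_of_nonneg
      (fun j _ => by linarith [hcov1 j] : ∀ j ∈ Finset.univ, 0 ≤ cov j - 1)).mp h0
    intro j
    have := this j (Finset.mem_univ j)
    linarith
  have hCmS_eq : ∑ v ∈ Cfin \ Sfin, x v = 0 := by linarith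
  have hzero : ∀ v ∈ Cfin \ Sfin, x v = 0 := by
    intro v hv
    exact (Finset.sum_eq_zero_iff_of_nonneg (fun v _ => hx0 v)).mp hCmS_eq v hv
  -- each truncated cycle segment contributes exactly x(hub i)
  have hBi : ∀ j, (((Wl.H j).support.dropLast).map x).sum = x (Wl.hub j) := by
    intro j
    obtain ⟨t, ht, htne⟩ := Wl.cycle_nonnil j
    have hdl : (Wl.H j).support.dropLast = Wl.hub j :: t.dropLast := by
      rw [ht, List.dropLast_cons_of_ne_nil htne]
    have hrest : ∀ v ∈ t.dropLast, x v = 0 := by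
      intro v hv
      apply hzero
      rw [Finset.mem_sdiff]
      constructor
      · rw [hCfin]
        exact Finset.mem_biUnion.mpr ⟨j, Finset.mem_univ j,
          List.mem_toFinset.mpr (by rw [hdl]; exact List.mem_cons_of_mem _ hv)⟩
      · intro hvS
        rw [hSfin] at hvS
        obtain ⟨k, _, hvk⟩ := Finset.mem_biUnion.mp hvS
        have hvk' : v ∈ (Wl.S k).support := List.mem_toFinset.mp hvk
        have hvh : v ∈ (Wl.H j).support := by
          rw [ht]; exact List.mem_cons_of_mem _ (List.mem_of_mem_dropLast hv)
        have hvhub : v = Wl.hub k := Wl.spoke_meets_cycle k j v hvk' hvh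
        have hcs := Wl.cycle_simple v
        have hsingle : ((Wl.H j).support.dropLast).count v
            ≤ ∑ i, ((Wl.H i).support.dropLast).count v :=
          Finset.single_le_sum (f := fun i => ((Wl.H i).support.dropLast).count v)
            (fun i _ => Nat.zero_le _) (Finset.mem_univ j)
        by_cases hkj : k = j
        · subst hkj
          have h2 : 2 ≤ ((Wl.H k).support.dropLast).count v := by
            rw [hdl, hvhub, List.count_cons_self]
            have : 1 ≤ List.count (Wl.hub k) t.dropLast := by
              rw [← hvhub]
              exact List.count_pos_iff.mpr hv
            omega
          omega
        · have h1 : 1 ≤ ((Wl.H j).support.dropLast).count v := by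
            rw [hdl]
            exact List.count_pos_iff.mpr (List.mem_cons_of_mem _ hv)
          have h1' : 1 ≤ ((Wl.H k).support.dropLast).count v := by
            obtain ⟨t', ht', htne'⟩ := Wl.cycle_nonnil k
            rw [ht', List.dropLast_cons_of_ne_nil htne', hvhub, List.count_cons_self]
            omega
          have hpair : ((Wl.H k).support.dropLast).count v
              + ((Wl.H j).support.dropLast).count v
              ≤ ∑ i, ((Wl.H i).support.dropLast).count v := by
            rw [← Finset.sum_pair (f := fun i => ((Wl.H i).support.dropLast).count v) hkj]
            exact Finset.sum_le_sum_of_subset (Finset.subset_univ _)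
          omega
    rw [hdl]
    simp only [List.map_cons, List.sum_cons]
    have hzt : (t.dropLast.map x).sum = 0 :=
      List.sum_eq_zero fun q hq => by
        obtain ⟨v, hv, rfl⟩ := List.mem_map.mp hq
        exact hrest v hv
    rw [hzt, add_zero]
  have key : ∀ j, u j + u (finRotate Wl.d j) = 1 := by
    intro j
    have h1 := hcovi j
    rw [hcsum j, hBi j] at h1
    have h2 := hu_last j
    linarith
  -- iterate the relation around the odd cycle
  have iter : ∀ (k : ℕ) (j : Fin Wl.d),
      u ((⇑(finRotate Wl.d))^[k] j) = if Even k then u j else 1 - u j := by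
    intro k
    induction k with
    | zero => intro j; simp
    | succ n ih =>
      intro j
      rw [Function.iterate_succ_apply, ih (finRotate Wl.d j)]
      by_cases hn : Even n
      · have : ¬ Even (n + 1) := by simp [Nat.even_add_one, hn]
        rw [if_pos hn, if_neg this]
        linarith [key j]
      · have : Even (n + 1) := by simp [Nat.even_add_one, hn]
        rw [if_neg hn, if_pos this]
        linarith [key j]
  have hui : u i = 1 - u i := by
    have h1 := iter Wl.d i
    rw [finRotate_iterate_self] at h1
    rw [if_neg (Nat.not_even_iff_odd.mpr Wl.hodd)] at h1
    exact h1
  have : u i = 1/2 := by linarith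
  rw [List.sum_toFinset x (Wl.spoke_path i)]
  exact this
end

section
/- The function e : Dʳ → {0, 1/2, 1} defined by e(x) = 0 if x_1 = x_2 = … = x_r, e(x) = 1 if there exist i, j with ⊥ ≠ x_i ≠ x_j ≠ ⊥, and e(x) = 1/2 otherwise, is k-submodular. -/
open scoped ENNReal

-- The domain `D` is modelled as `Option α`, with `⊥ = none` and `D_I = α` (the
-- non-`⊥` elements, embedded via `some`). In the partial order, `⊥ < a` for every
-- `a ∈ D_I` and distinct non-`⊥` elements are incomparable.

-- `a ⊓ b`: the minimum of `a` and `b` if they are comparable, and `⊥` otherwise.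
open Classical in
noncomputable def dmeet {α : Type} : Option α → Option α → Option α
  | none, _ => none
  | some _, none => none
  | some a, some b => if a = b then some a else none

-- `a ⊔ b`: the maximum of `a` and `b` if they are comparable, and `⊥` otherwise.
open Classical in
noncomputable def djoin {α : Type} : Option α → Option α → Option α
  | none, b => b
  | some a, none => some a
  | some a, some b => if a = b then some a else none

-- The r-ary function `e`: value `0` if all coordinates are equal, `1` if two
-- coordinates are distinct non-`⊥` values, and `1/2` otherwise.
open Classical in
noncomputable def eFun {α : Type} (r : ℕ) : (Fin r → Option α) → ℝ≥0∞ :=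
  fun z =>
    if ∀ i j : Fin r, z i = z j then 0
    else if ∃ i j : Fin r, z i ≠ none ∧ z j ≠ none ∧ z i ≠ z j then 1
    else 1/2

section helpers
variable {α : Type}

lemma dmeet_eq_some {a b : Option α} {v : α} (h : dmeet a b = some v) :
    a = some v ∧ b = some v := by
  cases a <;> cases b <;> simp_all [dmeet] <;> aesop

lemma djoin_eq_some {a b : Option α} {v : α} (h : djoin a b = some v) :
    (a = none ∨ a = some v) ∧ (b = none ∨ b = some v) ∧ (a = some v ∨ b = some v) := by
  cases a <;> cases b <;> simp_all [djoin] <;> aesop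

lemma djoin_some_left (a : α) (b : Option α) :
    djoin (some a) b = none ∨ djoin (some a) b = some a := by
  cases b <;> simp [djoin] <;> tauto

lemma djoin_some_right (a : Option α) (b : α) :
    djoin a (some b) = none ∨ djoin a (some b) = some b := by
  cases a <;> simp [djoin] <;> tauto

lemma dmeet_some_left (a : α) (b : Option α) :
    dmeet (some a) b = none ∨ (dmeet (some a) b = some a ∧ b = some a) := by
  cases b <;> simp [dmeet] <;> tauto

lemma dmeet_some_right (a : Option α) (b : α) :
    dmeet a (some b) = none ∨ (dmeet a (some b) = some b ∧ a = some b) := by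
  cases a <;> simp [dmeet] <;> tauto

lemma djoin_some_left_eq_none {a : α} {b : Option α}
    (h : djoin (some a) b = none) : ∃ c, b = some c ∧ c ≠ a := by
  cases b <;> simp_all [djoin] <;> aesop

lemma djoin_some_right_eq_none {a : Option α} {b : α}
    (h : djoin a (some b) = none) : ∃ c, a = some c ∧ c ≠ b := by
  cases a <;> simp_all [djoin] <;> aesop

lemma djoin_none_right (a : Option α) : djoin a none = a := by cases a <;> rfl
lemma dmeet_none_right (a : Option α) : dmeet a none = none := by cases a <;> rfl

-- eFun value lemmas
variable {r : ℕ} {z : Fin r → Option α}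

lemma eFun_eq_zero (h : ∀ i j, z i = z j) : eFun r z = 0 := if_pos h

lemma eFun_eq_one (h : ∃ i j : Fin r, z i ≠ none ∧ z j ≠ none ∧ z i ≠ z j) :
    eFun r z = 1 := by
  obtain ⟨i, j, _, _, hij⟩ := h
  unfold eFun
  rw [if_neg (fun hc => hij (hc i j)), if_pos ⟨i, j, ‹_›, ‹_›, hij⟩]

lemma eFun_eq_half (h1 : ¬∀ i j, z i = z j)
    (h2 : ¬∃ i j : Fin r, z i ≠ none ∧ z j ≠ none ∧ z i ≠ z j) : eFun r z = 1/2 := by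
  unfold eFun; rw [if_neg h1, if_neg h2]

lemma eFun_le_one : eFun r z ≤ 1 := by
  unfold eFun; split_ifs
  · exact zero_le_one
  · exact le_rfl
  · exact ENNReal.half_le_self

lemma half_le_eFun (h : ¬∀ i j, z i = z j) : 1/2 ≤ eFun r z := by
  unfold eFun; rw [if_neg h]; split_ifs
  · exact ENNReal.half_le_self
  · exact le_rfl

end helpers

section struct
variable {α : Type} {r : ℕ} {x y : Fin r → Option α}

/-- If the meet is "bad" then both `x` and `y` are bad. -/
lemma bad_meet (h : ∃ i j : Fin r, dmeet (x i) (y i) ≠ none ∧ dmeet (x j) (y j) ≠ none ∧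
      dmeet (x i) (y i) ≠ dmeet (x j) (y j)) :
    (∃ i j : Fin r, x i ≠ none ∧ x j ≠ none ∧ x i ≠ x j) ∧
    (∃ i j : Fin r, y i ≠ none ∧ y j ≠ none ∧ y i ≠ y j) := by
  obtain ⟨i, j, hi, hj, hij⟩ := h
  obtain ⟨v, hv⟩ := Option.ne_none_iff_exists'.mp hi
  obtain ⟨w, hw⟩ := Option.ne_none_iff_exists'.mp hj
  obtain ⟨hxi, hyi⟩ := dmeet_eq_some hv
  obtain ⟨hxj, hyj⟩ := dmeet_eq_some hw
  rw [hv, hw] at hij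
  constructor
  · exact ⟨i, j, by simp [hxi], by simp [hxj], by rw [hxi, hxj]; exact hij⟩
  · exact ⟨i, j, by simp [hyi], by simp [hyj], by rw [hyi, hyj]; exact hij⟩

/-- If both `x` and `y` are constant, meet and join are constant. -/
lemma const_meet_join (hx : ∀ i j, x i = x j) (hy : ∀ i j, y i = y j) :
    (∀ i j, dmeet (x i) (y i) = dmeet (x j) (y j)) ∧
    (∀ i j, djoin (x i) (y i) = djoin (x j) (y j)) :=
  ⟨fun i j => by rw [hx i j, hy i j], fun i j => by rw [hx i j, hy i j]⟩

/-- If the join is bad and `y` is constant, then `x` is bad. -/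
lemma bad_join_const_right
    (h : ∃ i j : Fin r, djoin (x i) (y i) ≠ none ∧ djoin (x j) (y j) ≠ none ∧
      djoin (x i) (y i) ≠ djoin (x j) (y j))
    (hy : ∀ i j, y i = y j) :
    ∃ i j : Fin r, x i ≠ none ∧ x j ≠ none ∧ x i ≠ x j := by
  obtain ⟨i, j, hi, hj, hij⟩ := h
  cases hc : y i with
  | none =>
    have hji : djoin (x i) (y i) = x i := by rw [hc]; exact djoin_none_right _
    have hjj : djoin (x j) (y j) = x j := by rw [hy j i, hc]; exact djoin_none_right _
    rw [hji] at hi hij; rw [hjj] at hj hij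
    exact ⟨i, j, hi, hj, hij⟩
  | some b =>
    exfalso
    have h1 : djoin (x i) (y i) = some b := by
      rw [hc]; rcases djoin_some_right (x i) b with h' | h'
      · rw [hc] at hi; exact absurd h' hi
      · exact h'
    have h2 : djoin (x j) (y j) = some b := by
      rw [hy j i, hc]; rcases djoin_some_right (x j) b with h' | h'
      · rw [hy j i, hc] at hj; exact absurd h' hj
      · exact h'
    exact hij (h1.trans h2.symm)

/-- If the join is bad and `x` is constant, then `y` is bad. -/
lemma bad_join_const_left
    (h : ∃ i j : Fin r, djoin (x i) (y i) ≠ none ∧ djoin (x j) (y j) ≠ none ∧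
      djoin (x i) (y i) ≠ djoin (x j) (y j))
    (hx : ∀ i j, x i = x j) :
    ∃ i j : Fin r, y i ≠ none ∧ y j ≠ none ∧ y i ≠ y j := by
  obtain ⟨i, j, hi, hj, hij⟩ := h
  cases hc : x i with
  | none =>
    have hji : djoin (x i) (y i) = y i := by rw [hc]; rfl
    have hjj : djoin (x j) (y j) = y j := by rw [hx j i, hc]; rfl
    rw [hji] at hi hij; rw [hjj] at hj hij
    exact ⟨i, j, hi, hj, hij⟩
  | some a =>
    exfalso
    have h1 : djoin (x i) (y i) = some a := by
      rw [hc]; rcases djoin_some_left a (y i) with h' | h'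
      · rw [hc] at hi; exact absurd h' hi
      · exact h'
    have h2 : djoin (x j) (y j) = some a := by
      rw [hx j i, hc]; rcases djoin_some_left a (y j) with h' | h'
      · rw [hx j i, hc] at hj; exact absurd h' hj
      · exact h'
    exact hij (h1.trans h2.symm)

end struct

section struct2
variable {α : Type} {r : ℕ} {x y : Fin r → Option α}

/-- meet nonconstant, join nonconstant, `x` constant → `y` bad. -/
lemma nonconst_const_left
    (hm : ¬∀ i j, dmeet (x i) (y i) = dmeet (x j) (y j))
    (hj : ¬∀ i j, djoin (x i) (y i) = djoin (x j) (y j))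
    (hx : ∀ i j, x i = x j) :
    ∃ i j : Fin r, y i ≠ none ∧ y j ≠ none ∧ y i ≠ y j := by
  push_neg at hm hj
  obtain ⟨p, q, hpq⟩ := hm
  obtain ⟨u, v, huv⟩ := hj
  cases hc : x p with
  | none =>
    exfalso
    have hall : ∀ k, x k = none := fun k => (hx k p).trans hc
    exact hpq (by rw [hall p, hall q]; rfl)
  | some a =>
    have hall : ∀ k, x k = some a := fun k => (hx k p).trans hc
    -- meet values are in {none, some a}; some coordinate of meet is `some a`
    have hmeet : ∀ k, dmeet (x k) (y k) = none ∨
        (dmeet (x k) (y k) = some a ∧ y k = some a) := by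
      intro k; rw [hall k]; exact dmeet_some_left a (y k)
    have hy1 : ∃ k, y k = some a := by
      rcases hmeet p with h1 | h1
      · rcases hmeet q with h2 | h2
        · exact absurd (h1.trans h2.symm) hpq
        · exact ⟨q, h2.2⟩
      · exact ⟨p, h1.2⟩
    -- join values are in {none, some a}; some coordinate of join is none
    have hjoin : ∀ k, djoin (x k) (y k) = none ∨ djoin (x k) (y k) = some a := by
      intro k; rw [hall k]; exact djoin_some_left a (y k)
    have hy2 : ∃ k c, y k = some c ∧ c ≠ a := by
      have hnone : ∃ k, djoin (x k) (y k) = none := by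
        rcases hjoin u with h1 | h1
        · exact ⟨u, h1⟩
        · rcases hjoin v with h2 | h2
          · exact ⟨v, h2⟩
          · exact absurd (h1.trans h2.symm) huv
      obtain ⟨k, hk⟩ := hnone
      rw [hall k] at hk
      obtain ⟨c, hc', hca⟩ := djoin_some_left_eq_none hk
      exact ⟨k, c, hc', hca⟩
    obtain ⟨k0, hk0⟩ := hy1
    obtain ⟨k1, c, hk1, hca⟩ := hy2
    exact ⟨k0, k1, by simp [hk0], by simp [hk1],
      by rw [hk0, hk1]; exact fun h => hca (Option.some.inj h).symm⟩

/-- meet nonconstant, join nonconstant, `y` constant → `x` bad. -/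
lemma nonconst_const_right
    (hm : ¬∀ i j, dmeet (x i) (y i) = dmeet (x j) (y j))
    (hj : ¬∀ i j, djoin (x i) (y i) = djoin (x j) (y j))
    (hy : ∀ i j, y i = y j) :
    ∃ i j : Fin r, x i ≠ none ∧ x j ≠ none ∧ x i ≠ x j := by
  push_neg at hm hj
  obtain ⟨p, q, hpq⟩ := hm
  obtain ⟨u, v, huv⟩ := hj
  cases hc : y p with
  | none =>
    exfalso
    have hall : ∀ k, y k = none := fun k => (hy k p).trans hc
    exact hpq (by rw [hall p, hall q, dmeet_none_right, dmeet_none_right])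
  | some b =>
    have hall : ∀ k, y k = some b := fun k => (hy k p).trans hc
    have hmeet : ∀ k, dmeet (x k) (y k) = none ∨
        (dmeet (x k) (y k) = some b ∧ x k = some b) := by
      intro k; rw [hall k]; exact dmeet_some_right (x k) b
    have hx1 : ∃ k, x k = some b := by
      rcases hmeet p with h1 | h1
      · rcases hmeet q with h2 | h2
        · exact absurd (h1.trans h2.symm) hpq
        · exact ⟨q, h2.2⟩
      · exact ⟨p, h1.2⟩
    have hjoin : ∀ k, djoin (x k) (y k) = none ∨ djoin (x k) (y k) = some b := by
      intro k; rw [hall k]; exact djoin_some_right (x k) b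
    have hx2 : ∃ k c, x k = some c ∧ c ≠ b := by
      have hnone : ∃ k, djoin (x k) (y k) = none := by
        rcases hjoin u with h1 | h1
        · exact ⟨u, h1⟩
        · rcases hjoin v with h2 | h2
          · exact ⟨v, h2⟩
          · exact absurd (h1.trans h2.symm) huv
      obtain ⟨k, hk⟩ := hnone
      rw [hall k] at hk
      obtain ⟨c, hc', hcb⟩ := djoin_some_right_eq_none hk
      exact ⟨k, c, hc', hcb⟩
    obtain ⟨k0, hk0⟩ := hx1
    obtain ⟨k1, c, hk1, hcb⟩ := hx2
    exact ⟨k0, k1, by simp [hk0], by simp [hk1],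
      by rw [hk0, hk1]; exact fun h => hcb (Option.some.inj h).symm⟩

/-- meet nonconstant and join bad → both `x` and `y` nonconstant. -/
lemma nonconst_meet_bad_join
    (hm : ¬∀ i j, dmeet (x i) (y i) = dmeet (x j) (y j))
    (hj : ∃ i j : Fin r, djoin (x i) (y i) ≠ none ∧ djoin (x j) (y j) ≠ none ∧
      djoin (x i) (y i) ≠ djoin (x j) (y j)) :
    (¬∀ i j, x i = x j) ∧ (¬∀ i j, y i = y j) := by
  obtain ⟨i, j, hi, hj', hij⟩ := hj
  constructor
  · intro hx
    cases hc : x i with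
    | none =>
      have hall : ∀ k, x k = none := fun k => (hx k i).trans hc
      exact hm (fun k l => by rw [hall k, hall l]; rfl)
    | some a =>
      have hall : ∀ k, x k = some a := fun k => (hx k i).trans hc
      have h1 : djoin (x i) (y i) = some a := by
        rcases djoin_some_left a (y i) with h' | h'
        · rw [← hall i] at h'; exact absurd h' hi
        · rw [hall i]; exact h'
      have h2 : djoin (x j) (y j) = some a := by
        rcases djoin_some_left a (y j) with h' | h'
        · rw [← hall j] at h'; exact absurd h' hj'
        · rw [hall j]; exact h'
      exact hij (h1.trans h2.symm)
  · intro hy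
    cases hc : y i with
    | none =>
      have hall : ∀ k, y k = none := fun k => (hy k i).trans hc
      exact hm (fun k l => by rw [hall k, hall l, dmeet_none_right, dmeet_none_right])
    | some b =>
      have hall : ∀ k, y k = some b := fun k => (hy k i).trans hc
      have h1 : djoin (x i) (y i) = some b := by
        rcases djoin_some_right (x i) b with h' | h'
        · rw [← hall i] at h'; exact absurd h' hi
        · rw [hall i]; exact h'
      have h2 : djoin (x j) (y j) = some b := by
        rcases djoin_some_right (x j) b with h' | h'
        · rw [← hall j] at h'; exact absurd h' hj'
        · rw [hall j]; exact h'
      exact hij (h1.trans h2.symm)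

/-- join bad and neither `x` nor `y` bad → meet constant. -/
lemma bad_join_not_bad
    (hj : ∃ i j : Fin r, djoin (x i) (y i) ≠ none ∧ djoin (x j) (y j) ≠ none ∧
      djoin (x i) (y i) ≠ djoin (x j) (y j))
    (hnx : ¬∃ i j : Fin r, x i ≠ none ∧ x j ≠ none ∧ x i ≠ x j)
    (hny : ¬∃ i j : Fin r, y i ≠ none ∧ y j ≠ none ∧ y i ≠ y j) :
    ∀ i j, dmeet (x i) (y i) = dmeet (x j) (y j) := by
  push_neg at hnx hny
  obtain ⟨i, j, hi, hj', hij⟩ := hj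
  obtain ⟨v, hv⟩ := Option.ne_none_iff_exists'.mp hi
  obtain ⟨w, hw⟩ := Option.ne_none_iff_exists'.mp hj'
  have hvw : v ≠ w := by rw [hv, hw] at hij; simpa using hij
  obtain ⟨_, _, hiv⟩ := djoin_eq_some hv
  obtain ⟨_, _, hjw⟩ := djoin_eq_some hw
  have hnone : ∀ k, dmeet (x k) (y k) = none := by
    intro k
    by_contra hk
    obtain ⟨u, hu⟩ := Option.ne_none_iff_exists'.mp hk
    obtain ⟨hxk, hyk⟩ := dmeet_eq_some hu
    have huv : u = v := by
      rcases hiv with h' | h'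
      · have := hnx i k (by simp [h']) (by simp [hxk])
        rw [h', hxk] at this; simpa using this.symm
      · have := hny i k (by simp [h']) (by simp [hyk])
        rw [h', hyk] at this; simpa using this.symm
    have huw : u = w := by
      rcases hjw with h' | h'
      · have := hnx j k (by simp [h']) (by simp [hxk])
        rw [h', hxk] at this; simpa using this.symm
      · have := hny j k (by simp [h']) (by simp [hyk])
        rw [h', hyk] at this; simpa using this.symm
    exact hvw (huv ▸ huw)
  intro k l; rw [hnone k, hnone l]

end struct2

/-- the function `e` is k-submodular (meet and join taken
componentwise). -/
theorem eFun_ksubmodular {α : Type} (r : ℕ) (x y : Fin r → Option α) :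
    eFun r (fun i => dmeet (x i) (y i)) + eFun r (fun i => djoin (x i) (y i)) ≤
      eFun r x + eFun r y := by
  by_cases hmc : ∀ i j, dmeet (x i) (y i) = dmeet (x j) (y j)
  · by_cases hjc : ∀ i j, djoin (x i) (y i) = djoin (x j) (y j)
    · rw [eFun_eq_zero hmc, eFun_eq_zero hjc, zero_add]
      exact zero_le
    · by_cases hjb : ∃ i j : Fin r, djoin (x i) (y i) ≠ none ∧ djoin (x j) (y j) ≠ none ∧
          djoin (x i) (y i) ≠ djoin (x j) (y j)
      · rw [eFun_eq_zero hmc, eFun_eq_one hjb, zero_add]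
        by_cases hx : ∀ i j, x i = x j
        · rw [eFun_eq_one (bad_join_const_left hjb hx)]
          exact le_add_self
        · by_cases hy : ∀ i j, y i = y j
          · rw [eFun_eq_one (bad_join_const_right hjb hy)]
            exact le_self_add
          · calc (1 : ℝ≥0∞) = 1/2 + 1/2 := (ENNReal.add_halves 1).symm
              _ ≤ _ := add_le_add (half_le_eFun hx) (half_le_eFun hy)
      · rw [eFun_eq_zero hmc, eFun_eq_half hjc hjb, zero_add]
        have hxy : ¬(∀ i j, x i = x j) ∨ ¬(∀ i j, y i = y j) := by
          by_contra h
          rw [not_or, not_not, not_not] at h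
          exact hjc (const_meet_join h.1 h.2).2
        rcases hxy with h | h
        · exact (half_le_eFun h).trans le_self_add
        · exact (half_le_eFun h).trans le_add_self
  · by_cases hmb : ∃ i j : Fin r, dmeet (x i) (y i) ≠ none ∧ dmeet (x j) (y j) ≠ none ∧
        dmeet (x i) (y i) ≠ dmeet (x j) (y j)
    · obtain ⟨hbx, hby⟩ := bad_meet hmb
      rw [eFun_eq_one hbx, eFun_eq_one hby]
      exact add_le_add eFun_le_one eFun_le_one
    · rw [eFun_eq_half hmc hmb]
      by_cases hjc : ∀ i j, djoin (x i) (y i) = djoin (x j) (y j)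
      · rw [eFun_eq_zero hjc, add_zero]
        have hxy : ¬(∀ i j, x i = x j) ∨ ¬(∀ i j, y i = y j) := by
          by_contra h
          rw [not_or, not_not, not_not] at h
          exact hmc (const_meet_join h.1 h.2).1
        rcases hxy with h | h
        · exact (half_le_eFun h).trans le_self_add
        · exact (half_le_eFun h).trans le_add_self
      · by_cases hjb : ∃ i j : Fin r, djoin (x i) (y i) ≠ none ∧ djoin (x j) (y j) ≠ none ∧
            djoin (x i) (y i) ≠ djoin (x j) (y j)
        · rw [eFun_eq_one hjb]
          obtain ⟨hnx, hny⟩ := nonconst_meet_bad_join hmc hjb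
          have hbxy : (∃ i j : Fin r, x i ≠ none ∧ x j ≠ none ∧ x i ≠ x j) ∨
              (∃ i j : Fin r, y i ≠ none ∧ y j ≠ none ∧ y i ≠ y j) := by
            by_contra h
            rw [not_or] at h
            exact hmc (bad_join_not_bad hjb h.1 h.2)
          rcases hbxy with h | h
          · rw [eFun_eq_one h]
            calc (1:ℝ≥0∞)/2 + 1 = 1 + 1/2 := add_comm _ _
              _ ≤ 1 + eFun r y := add_le_add_right (half_le_eFun hny) 1
          · rw [eFun_eq_one h]
            exact add_le_add (half_le_eFun hnx) le_rfl
        · rw [eFun_eq_half hjc hjb, ENNReal.add_halves]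
          by_cases hx : ∀ i j, x i = x j
          · rw [eFun_eq_one (nonconst_const_left hmc hjc hx)]
            exact le_add_self
          · by_cases hy : ∀ i j, y i = y j
            · rw [eFun_eq_one (nonconst_const_right hmc hjc hy)]
              exact le_self_add
            · calc (1 : ℝ≥0∞) = 1/2 + 1/2 := (ENNReal.add_halves 1).symm
                _ ≤ _ := add_le_add (half_le_eFun hx) (half_le_eFun hy)
end

section
/- Let (F, F*) be a nice pair and suppose for an edge uv there exist walks W with [W] in the subdomain D(uv) (i.e., W∘uv ∈ F*) such that the class f_{uv}([W]) := [W∘uv] lies in D(vu). Then D(uv) = D(u), D(vu) = D(v), and f_{uv} is a bijection from D(u) to D(v) with inverse f_{vu} (i.e., the edge behaves as a permutation constraint). -/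
/-- A pair `(F, F*)` of sets of walks is *nice* if: `F ⊆ F*`; `F*` is closed under
taking prefixes; the relation `P ≡ Q` (for `P, Q ∈ F*` ending at the same vertex,
defined by `P ∘ Q⁻¹ ∉ F`) is an equivalence relation; and equivalent walks can be
extended by an edge inside `F*` in the same ways. -/
structure IsNice {V : Type} {adj : V → V → Prop}
    (hs : ∀ u v : V, adj u v → adj v u)
    (F Fstar : ∀ u v : V, Wk adj u v → Prop) : Prop where
  sub : ∀ u v (W : Wk adj u v), F u v W → Fstar u v W
  prefix_closed : ∀ u v w (P : Wk adj u v) (Q : Wk adj v w),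
    Fstar u w (P.app Q) → Fstar u v P
  refl : ∀ u t (P : Wk adj u t), Fstar u t P → ¬ F u u (P.app (P.rev hs))
  symm : ∀ u v t (P : Wk adj u t) (Q : Wk adj v t), Fstar u t P → Fstar v t Q →
    ¬ F u v (P.app (Q.rev hs)) → ¬ F v u (Q.app (P.rev hs))
  trans : ∀ u v w t (P : Wk adj u t) (Q : Wk adj v t) (R : Wk adj w t),
    Fstar u t P → Fstar v t Q → Fstar w t R →
    ¬ F u v (P.app (Q.rev hs)) → ¬ F v w (Q.app (R.rev hs)) →
    ¬ F u w (P.app (R.rev hs))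
  ext : ∀ u v t t' (P : Wk adj u t) (Q : Wk adj v t) (h : adj t t'),
    Fstar u t P → Fstar v t Q → ¬ F u v (P.app (Q.rev hs)) →
    (Fstar u t' (P.ext h) ↔ Fstar v t' (Q.ext h))

/-! ### Auxiliary walk lemmas -/

theorem Wk.app_nil' {V : Type} {adj : V → V → Prop} :
    ∀ {u v : V} (P : Wk adj u v), P.app (.nil v) = P
  | _, _, .nil _ => rfl
  | _, _, .cons h p => by rw [Wk.app, Wk.app_nil']

theorem Wk.app_assoc' {V : Type} {adj : V → V → Prop} :
    ∀ {a b c d : V} (P : Wk adj a b) (Q : Wk adj b c) (R : Wk adj c d),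
      (P.app Q).app R = P.app (Q.app R)
  | _, _, _, _, .nil _, _, _ => rfl
  | _, _, _, _, .cons h p, Q, R => by
      simp only [Wk.app, Wk.app_assoc' p Q R]

theorem Wk.ext_app' {V : Type} {adj : V → V → Prop} {s t t' w : V}
    (P : Wk adj s t) (h : adj t t') (R : Wk adj t' w) :
    (P.ext h).app R = P.app (.cons h R) := by
  simp only [Wk.ext, Wk.app_assoc', Wk.app]

theorem Wk.rev_ext' {V : Type} {adj : V → V → Prop}
    (hs : ∀ u v : V, adj u v → adj v u) {s t t' : V}
    (P : Wk adj s t) (h : adj t t') :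
    (P.ext h).rev hs = .cons (hs t t' h) (P.rev hs) := by
  induction P with
  | nil x => rfl
  | cons e p ih =>
      show Wk.app (Wk.rev hs (Wk.ext p h)) _ = _
      rw [ih]
      rfl

section NiceAux

variable {V : Type} {adj : V → V → Prop} (hs : ∀ u v : V, adj u v → adj v u)
  {F Fstar : ∀ u v : V, Wk adj u v → Prop} (hn : IsNice hs F Fstar)

include hn

/-- The key witness structure for an edge. -/
def EdgeWit {u v : V} (h : adj u v) : Prop :=
  ∃ (s : V) (W : Wk adj s u), Fstar s u W ∧ Fstar s v (W.ext h) ∧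
      Fstar s u ((W.ext h).ext (hs u v h))

theorem nice_ext_all {u v : V} (h : adj u v) (hex : EdgeWit hs (Fstar := Fstar) h)
    {s : V} (P : Wk adj s u) (hP : Fstar s u P) : Fstar s v (P.ext h) := by
  obtain ⟨s0, W, hW, hW1, hW2⟩ := hex
  by_cases hPW : F s s0 (P.app (W.rev hs))
  · -- `P ≢ W`: then `P ≢ W∘uv∘vu`, and the falsified walk `P∘uv∘vu∘W⁻¹`
    -- lies in `F ⊆ F*`; its prefix `P∘uv` is in `F*`.
    have hYW : ¬ F s0 s0 (((W.ext h).ext (hs u v h)).app (W.rev hs)) := by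
      have := hn.refl _ _ (W.ext h) hW1
      simp only [Wk.rev_ext', Wk.ext_app'] at this ⊢
      exact this
    have hPY : F s s0 (P.app (((W.ext h).ext (hs u v h)).rev hs)) := by
      by_contra hc
      exact hn.trans _ _ _ _ P ((W.ext h).ext (hs u v h)) W hP hW2 hW hc hYW hPW
    have hmem := hn.sub _ _ _ hPY
    have heq : P.app ((((W.ext h).ext (hs u v h))).rev hs) =
        (P.ext h).app (.cons (hs u v h) (W.rev hs)) := by
      simp only [Wk.rev_ext', Wk.ext_app']
    rw [heq] at hmem
    exact hn.prefix_closed _ _ _ _ _ hmem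
  · exact (hn.ext _ _ _ _ P W h hP hW hPW).mpr hW1

theorem nice_wit_rev {u v : V} (h : adj u v) (hex : EdgeWit hs (Fstar := Fstar) h) :
    EdgeWit hs (Fstar := Fstar) (hs u v h) := by
  obtain ⟨s0, W, hW, hW1, hW2⟩ := hex
  exact ⟨s0, W.ext h, hW1, hW2,
    nice_ext_all hs hn h ⟨s0, W, hW, hW1, hW2⟩ _ hW2⟩

theorem nice_fb {u v : V} (h : adj u v) (hex : EdgeWit hs (Fstar := Fstar) h)
    {s : V} (P : Wk adj s u) (hP : Fstar s u P) :
    ¬ F s s (((P.ext h).ext (hs u v h)).app (P.rev hs)) := by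
  have h1 := nice_ext_all hs hn h hex P hP
  have := hn.refl _ _ (P.ext h) h1
  simp only [Wk.rev_ext', Wk.ext_app'] at this ⊢
  exact this

theorem nice_fb2 {u v : V} (h : adj u v) (hex : EdgeWit hs (Fstar := Fstar) h)
    {s : V} (P : Wk adj s u) (hP : Fstar s u P) :
    Fstar s u ((P.ext h).ext (hs u v h)) :=
  nice_ext_all hs hn (hs u v h) (nice_wit_rev hs hn h hex) _
    (nice_ext_all hs hn h hex P hP)

theorem nice_cong {u v : V} (h : adj u v) (hex : EdgeWit hs (Fstar := Fstar) h)
    {s s' : V} (P : Wk adj s u) (P' : Wk adj s' u)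
    (hP : Fstar s u P) (hP' : Fstar s' u P')
    (hPP' : ¬ F s s' (P.app (P'.rev hs))) :
    ¬ F s s' ((P.ext h).app ((P'.ext h).rev hs)) := by
  have h2 : Fstar s u ((P.ext h).ext (hs u v h)) := nice_fb2 hs hn h hex P hP
  have hfb := nice_fb hs hn h hex P hP
  have := hn.trans _ _ _ _ ((P.ext h).ext (hs u v h)) P P' h2 hP hP' hfb hPP'
  simp only [Wk.rev_ext', Wk.ext_app'] at this ⊢
  exact this

end NiceAux

/-- let `(F, F*)` be a nice pair and `uv` an edge such that some
class `[W] ∈ D(uv)` (i.e. `W∘uv ∈ F*`) has `f_{uv}([W]) ∈ D(vu)` (i.e.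
`(W∘uv)∘vu ∈ F*`). Then `D(uv) = D(u)`, `D(vu) = D(v)`, and `f_{uv} : D(u) → D(v)` is
a bijection with inverse `f_{vu}`, expressed on representatives: every `F*`-walk
ending at `u` extends by `uv`, every `F*`-walk ending at `v` extends by `vu`, going
forth and back returns to the same `≡`-class, and `f_{uv}` respects and reflects `≡`. -/
theorem nice_perm_edge
    {V : Type} {adj : V → V → Prop}
    (hs : ∀ u v : V, adj u v → adj v u)
    (F Fstar : ∀ u v : V, Wk adj u v → Prop)
    (hnice : IsNice hs F Fstar)
    {u v : V} (h : adj u v)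
    (hex : ∃ (s : V) (W : Wk adj s u), Fstar s u W ∧ Fstar s v (W.ext h) ∧
      Fstar s u ((W.ext h).ext (hs u v h))) :
    (∀ s (P : Wk adj s u), Fstar s u P → Fstar s v (P.ext h)) ∧
    (∀ s (Q : Wk adj s v), Fstar s v Q → Fstar s u (Q.ext (hs u v h))) ∧
    (∀ s (P : Wk adj s u), Fstar s u P →
      ¬ F s s (((P.ext h).ext (hs u v h)).app (P.rev hs))) ∧
    (∀ s (Q : Wk adj s v), Fstar s v Q →
      ¬ F s s (((Q.ext (hs u v h)).ext h).app (Q.rev hs))) ∧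
    (∀ s s' (P : Wk adj s u) (P' : Wk adj s' u), Fstar s u P → Fstar s' u P' →
      (¬ F s s' (P.app (P'.rev hs)) ↔
        ¬ F s s' ((P.ext h).app ((P'.ext h).rev hs)))) := by
  have hex' : EdgeWit hs (Fstar := Fstar) h := hex
  have hexr := nice_wit_rev hs hnice h hex'
  refine ⟨fun s P hP => nice_ext_all hs hnice h hex' P hP,
    fun s Q hQ => nice_ext_all hs hnice (hs u v h) hexr Q hQ,
    fun s P hP => nice_fb hs hnice h hex' P hP,
    fun s Q hQ => nice_fb hs hnice (hs u v h) hexr Q hQ,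
    fun s s' P P' hP hP' => ⟨fun hpp => nice_cong hs hnice h hex' P P' hP hP' hpp,
      fun H => ?_⟩⟩
  -- reflecting ≡: extend once more by `vu` and use forth-back equivalences
  have hFP1 : Fstar s v (P.ext h) := nice_ext_all hs hnice h hex' P hP
  have hFP1' : Fstar s' v (P'.ext h) := nice_ext_all hs hnice h hex' P' hP'
  have hFP2 : Fstar s u ((P.ext h).ext (hs u v h)) := nice_fb2 hs hnice h hex' P hP
  have hFP2' : Fstar s' u ((P'.ext h).ext (hs u v h)) := nice_fb2 hs hnice h hex' P' hP'
  have H2 := nice_cong hs hnice (hs u v h) hexr (P.ext h) (P'.ext h) hFP1 hFP1' H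
  have hb : ¬ F s s (((P.ext h).ext (hs u v h)).app (P.rev hs)) :=
    nice_fb hs hnice h hex' P hP
  have hb' : ¬ F s' s' (((P'.ext h).ext (hs u v h)).app (P'.rev hs)) :=
    nice_fb hs hnice h hex' P' hP'
  have hbs : ¬ F s s (P.app (((P.ext h).ext (hs u v h)).rev hs)) :=
    hnice.symm _ _ _ ((P.ext h).ext (hs u v h)) P hFP2 hP hb
  have t1 := hnice.trans _ _ _ _ P ((P.ext h).ext (hs u v h))
    (((P'.ext h).ext (hs u v h))) hP hFP2 hFP2' hbs H2
  exact hnice.trans _ _ _ _ P (((P'.ext h).ext (hs u v h))) P' hP hFP2' hP' t1 hb'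
end

section
/- For an instance I = (C, φ_∅) of 0/1/all Deletion with empty assigned set, and any two-fan constraint (φ(u)=a)∨(φ(v)=b) in C, the set B = {(u,a), (v,b)} is a branching set: every deletion set for I is a deletion set for at least one of I[u←a] or I[v←b]. -/
/-- `X` is a deletion set for the instance `(C, φ_A)`: some assignment on `V \ X`
agrees with `φ_A` on `A \ X` and satisfies every constraint both of whose endpoints
survive. -/
def IsDel {V : Type} {adj : V → V → Prop} {D : V → Type}
    (C : ∀ u v : V, adj u v → ZOA (D u) (D v))
    (A : Set V) (φA : ∀ v ∈ A, D v) (X : Set V) : Prop :=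
  ∃ φ : ∀ v : V, v ∉ X → D v,
    (∀ v (hv : v ∈ A) (hx : v ∉ X), φ v hx = φA v hv) ∧
    (∀ u v (h : adj u v) (hu : u ∉ X) (hv : v ∉ X), (C u v h).Sat (φ u hu) (φ v hv))

/-- for an instance `I = (C, φ_∅)` with empty assigned set and a
two-fan constraint `(φ(u)=a) ∨ (φ(v)=b)` in `C`, the set `B = {(u,a), (v,b)}` is a
branching set: every deletion set for `I` is a deletion set for `I[u←a]` or for
`I[v←b]`. -/
theorem twofan_branching_set
    {V : Type} {adj : V → V → Prop} {D : V → Type}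
    (C : ∀ u v : V, adj u v → ZOA (D u) (D v))
    {u v : V} (h : adj u v) (a : D u) (b : D v)
    (hC : C u v h = ZOA.twofan a b)
    (X : Set V)
    (hX : IsDel C ∅ (fun w hw => absurd hw (Set.notMem_empty w)) X) :
    IsDel C {u} (fun w hw => by rw [Set.mem_singleton_iff] at hw; subst hw; exact a) X ∨
    IsDel C {v} (fun w hw => by rw [Set.mem_singleton_iff] at hw; subst hw; exact b) X := by
  obtain ⟨φ, -, hsat⟩ := hX
  by_cases hu : u ∈ X
  · left
    exact ⟨φ, fun w hw hx => by simp at hw; subst hw; exact absurd hu hx, hsat⟩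
  by_cases hv : v ∈ X
  · right
    exact ⟨φ, fun w hw hx => by simp at hw; subst hw; exact absurd hv hx, hsat⟩
  have := hsat u v h hu hv
  rw [hC] at this
  rcases this with hua | hvb
  · left
    refine ⟨φ, fun w hw hx => ?_, hsat⟩
    simp only [Set.mem_singleton_iff] at hw; subst hw
    simpa using hua
  · right
    refine ⟨φ, fun w hw hx => ?_, hsat⟩
    simp only [Set.mem_singleton_iff] at hw; subst hw
    simpa using hvb
end
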